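/- If Y is dispensable in the hypergraph H, then H is connected if and only if H ∪ {Y} is connected. -/

import Mathlib

namespace HG

variable {α : Type*} [DecidableEq α]

/-- The carrier of a hypergraph: the union of its members. -/
def carrier (H : Finset (Finset α)) : Finset α := H.sup id

/-- A hypergraph (on its carrier) is a finite family of sets not containing `∅`. -/
def IsHypergraph (H : Finset (Finset α)) : Prop := ∅ ∉ H

/-- The restriction `H_Y = {X ∈ H ∣ X ⊆ Y}`. -/
def restrict (H : Finset (Finset α)) (Y : Finset α) : Finset (Finset α) :=
  H.filter (· ⊆ Y)

/-- `x` and `y` are joined by a path of `H`: a nonempty sequence of distinct members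
of `H`, consecutive members intersecting, the first containing `x`, the last `y`. -/
def Joined (H : Finset (Finset α)) (x y : α) : Prop :=
  ∃ (X : Finset α) (l : List (Finset α)),
    (X :: l).Nodup ∧ (∀ Z ∈ X :: l, Z ∈ H) ∧
    (X :: l).Chain' (fun A B => (A ∩ B).Nonempty) ∧
    x ∈ X ∧ y ∈ (X :: l).getLast (List.cons_ne_nil X l)

/-- Path-connectedness of a hypergraph: any two carrier elements are joined. -/
def Conn (H : Finset (Finset α)) : Prop :=
  ∀ x ∈ carrier H, ∀ y ∈ carrier H, Joined H x y

/-- `P` is a hypergraph partition of `H`: a partition of `H` whose family of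
carriers is a partition of the carrier of `H`. -/
def IsHGPartition (H : Finset (Finset α)) (P : Finset (Finset (Finset α))) : Prop :=
  (∀ Q ∈ P, Q ≠ ∅) ∧
  (∀ Q ∈ P, ∀ Q' ∈ P, Q ≠ Q' → Disjoint Q Q') ∧
  P.sup id = H ∧
  (∀ Q ∈ P, ∀ Q' ∈ P, Q ≠ Q' → Disjoint (carrier Q) (carrier Q'))

/-- A hypergraph is atomic when it contains all singletons of carrier elements. -/
def Atomic (H : Finset (Finset α)) : Prop := ∀ x ∈ carrier H, {x} ∈ H

/-- A hypergraph is saturated when intersecting members have their union in it. -/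
def Saturated (H : Finset (Finset α)) : Prop :=
  ∀ X ∈ H, ∀ Y ∈ H, (X ∩ Y).Nonempty → X ∪ Y ∈ H

/-- `Y` is dispensable in `H` when `(H_Y) \ {Y}` is a connected hypergraph on `Y`. -/
def Dispensable (H : Finset (Finset α)) (Y : Finset α) : Prop :=
  IsHypergraph ((restrict H Y).erase Y) ∧
  carrier ((restrict H Y).erase Y) = Y ∧
  Conn ((restrict H Y).erase Y)

/-- `J` enhances `H` when `J = H ∪ {Y}` for some `Y ∉ H` dispensable in `H`. -/
def Enhances (J H : Finset (Finset α)) : Prop :=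
  ∃ Y, Dispensable H Y ∧ Y ∉ H ∧ J = insert Y H

/-- Cognation: the equivalence closure of the enhancement relation. -/
def Cognate (H J : Finset (Finset α)) : Prop :=
  Relation.EqvGen Enhances H J

/-- The finest hypergraph partition: one all of whose parts are connected. -/
def FinestHGPartition (H : Finset (Finset α)) (P : Finset (Finset (Finset α))) : Prop :=
  IsHGPartition H P ∧ ∀ Q ∈ P, Conn Q

/-- Constructions of a hypergraph, defined recursively. -/
inductive IsConstruction : Finset (Finset α) → Finset (Finset α) → Prop
  | empty : IsConstruction ∅ ∅
  | conn {H K : Finset (Finset α)} {x : α} :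
      (carrier H).Nonempty → Conn H → x ∈ carrier H →
      IsConstruction (restrict H ((carrier H).erase x)) K →
      IsConstruction H (insert (carrier H) K)
  | parts {H : Finset (Finset α)} {P : Finset (Finset (Finset α))}
      {K : Finset (Finset α) → Finset (Finset α)} :
      2 ≤ (carrier H).card → ¬ Conn H → 2 ≤ P.card → FinestHGPartition H P →
      (∀ Q ∈ P, IsConstruction Q (K Q)) →
      IsConstruction H (P.sup K)

/-- An `M`-antichain: at least two members of `M`, pairwise incomparable. -/
def IsAntichainIn (M S : Finset (Finset α)) : Prop :=
  S ⊆ M ∧ 2 ≤ S.card ∧ ∀ X ∈ S, ∀ Y ∈ S, X ≠ Y → ¬ X ⊆ Y ∧ ¬ Y ⊆ X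

/-- `S` misses `H` when the union of `S` is not a member of `H`. -/
def Misses (H S : Finset (Finset α)) : Prop := S.sup id ∉ H

/-- `x` is `X`-superficial relative to `M`. -/
def Superficial (M : Finset (Finset α)) (X : Finset α) (x : α) : Prop :=
  x ∈ X ∧ ∀ Y ∈ M, Y ⊂ X → x ∉ Y

/-- ASC-hypergraph: atomic, saturated and connected hypergraph. -/
def ASC (H : Finset (Finset α)) : Prop :=
  IsHypergraph H ∧ Atomic H ∧ Saturated H ∧ Conn H

end HG

open HG

section Aux
variable {α : Type*} [DecidableEq α]

lemma mem_carrier' {H : Finset (Finset α)} {x : α} :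
    x ∈ carrier H ↔ ∃ Z ∈ H, x ∈ Z := by
  simp [carrier, Finset.mem_sup]

lemma joined_mono {H J : Finset (Finset α)} (hHJ : H ⊆ J) {x y : α}
    (h : Joined H x y) : Joined J x y := by
  obtain ⟨X, l, h1, h2, h3, h4, h5⟩ := h
  exact ⟨X, l, h1, fun Z hZ => hHJ (h2 Z hZ), h3, h4, h5⟩

lemma joined_refl {H : Finset (Finset α)} {Z : Finset α} (hZ : Z ∈ H) {x : α}
    (hx : x ∈ Z) : Joined H x x :=
  ⟨Z, [], by simp, by simpa using hZ, List.isChain_singleton _, hx, by simpa using hx⟩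

lemma joined_extend {H : Finset (Finset α)} {x y z : α} {Z : Finset α}
    (h : Joined H x y) (hZ : Z ∈ H) (hy : y ∈ Z) (hz : z ∈ Z) :
    Joined H x z := by
  obtain ⟨X, l, h1, h2, h3, h4, h5⟩ := h
  by_cases hmem : Z ∈ X :: l
  · obtain ⟨s, t, hst⟩ := List.append_of_mem hmem
    match s, hst with
    | [], hst =>
      simp only [List.nil_append, List.cons.injEq] at hst
      exact ⟨Z, [], by simp, by simpa using hZ, List.isChain_singleton _, hst.1 ▸ h4, by simpa using hz⟩
    | A :: s', hst =>
      simp only [List.cons_append, List.cons.injEq] at hst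
      obtain ⟨rfl, hl⟩ := hst
      refine ⟨X, s' ++ [Z], ?_, ?_, ?_, h4, ?_⟩
      · exact h1.sublist (by rw [hl]; simpa using (List.prefix_append _ t).sublist)
      · intro W hW
        apply h2 W
        rw [hl, show X :: (s' ++ Z :: t) = (X :: (s' ++ [Z])) ++ t by simp]
        exact List.mem_append_left _ hW
      · have : (X :: (s' ++ [Z])) <+: (X :: l) := by
          rw [hl]; exact ⟨t, by simp⟩
        exact h3.prefix this
      · simpa [List.getLast_append] using hz
  · refine ⟨X, l ++ [Z], ?_, ?_, ?_, h4, ?_⟩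
    · rw [show (X :: (l ++ [Z])) = (X :: l) ++ [Z] by rfl, List.nodup_append]
      exact ⟨h1, by simp, by simp only [List.mem_cons, not_or] at hmem; simp; exact ⟨fun h => hmem.1 h.symm, fun a ha h => hmem.2 (h ▸ ha)⟩⟩
    · intro W hW
      rcases List.mem_cons.1 hW with rfl | hW
      · exact h2 W (by simp)
      · rcases List.mem_append.1 hW with hW | hW
        · exact h2 W (by simp [hW])
        · simpa using (List.mem_singleton.1 hW) ▸ hZ
    · rw [show (X :: (l ++ [Z])) = (X :: l) ++ [Z] by simp]
      refine List.IsChain.append h3 (List.isChain_singleton _) ?_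
      intro a ha b hb
      rw [List.getLast?_eq_getLast (List.cons_ne_nil X l)] at ha
      rw [List.head?_cons] at hb
      obtain rfl := Option.some_injective _ ha
      obtain rfl := Option.some_injective _ hb
      exact ⟨y, Finset.mem_inter.2 ⟨h5, hy⟩⟩
    · simpa [List.getLast_append] using hz

def rel (H : Finset (Finset α)) (x y : α) : Prop := ∃ Z ∈ H, x ∈ Z ∧ y ∈ Z

lemma joined_of_rtg {H : Finset (Finset α)} {x y : α} (hx : x ∈ carrier H)
    (h : Relation.ReflTransGen (rel H) x y) : Joined H x y := by
  induction h with
  | refl =>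
    obtain ⟨Z, hZ, hxZ⟩ := mem_carrier'.1 hx
    exact joined_refl hZ hxZ
  | tail _ hbc ih =>
    obtain ⟨Z, hZ, hb, hc⟩ := hbc
    exact joined_extend ih hZ hb hc

lemma rtg_of_joined {H : Finset (Finset α)} {x y : α}
    (h : Joined H x y) : Relation.ReflTransGen (rel H) x y := by
  obtain ⟨X, l, h1, h2, h3, h4, h5⟩ := h
  clear h1
  induction l generalizing X x with
  | nil =>
    simp only [List.getLast_singleton] at h5
    exact Relation.ReflTransGen.single ⟨X, h2 X (by simp), h4, h5⟩
  | cons W l ih =>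
    obtain ⟨w, hw⟩ := (List.isChain_cons_cons.1 h3).1
    rw [Finset.mem_inter] at hw
    refine Relation.ReflTransGen.head ⟨X, h2 X (by simp), h4, hw.1⟩ ?_
    exact ih W (fun Z hZ => h2 Z (List.mem_cons_of_mem _ hZ))
      (List.isChain_cons_cons.1 h3).2 hw.2 (by simpa using h5)

end Aux

theorem connected_iff_insert_dispensable_connected
    {α : Type*} [DecidableEq α]
    (H : Finset (Finset α)) (hH : IsHypergraph H)
    (Y : Finset α) (hY : Dispensable H Y) :
    Conn H ↔ Conn (insert Y H) := by
  obtain ⟨hhg, hcar, hconn⟩ := hY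
  have hH'sub : (restrict H Y).erase Y ⊆ H := fun Z hZ =>
    (Finset.mem_filter.1 (Finset.mem_of_mem_erase hZ)).1
  have hYsub : Y ⊆ carrier H := by
    intro y hy
    rw [← hcar] at hy
    obtain ⟨Z, hZ, hyZ⟩ := mem_carrier'.1 hy
    exact mem_carrier'.2 ⟨Z, hH'sub hZ, hyZ⟩
  have hcarins : carrier (insert Y H) = carrier H := by
    rw [carrier, Finset.sup_insert]
    exact sup_eq_right.2 hYsub
  constructor
  · intro hc x hx y hy
    rw [hcarins] at hx hy
    exact joined_mono (Finset.subset_insert _ _) (hc x hx y hy)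
  · intro hc x hx y hy
    have h0 := rtg_of_joined (hc x (hcarins ▸ hx) y (hcarins ▸ hy))
    have step : ∀ a b, rel (insert Y H) a b → Relation.ReflTransGen (rel H) a b := by
      rintro a b ⟨Z, hZ, ha, hb⟩
      rcases Finset.mem_insert.1 hZ with rfl | hZ'
      · have ha' : a ∈ carrier ((restrict H Z).erase Z) := by rw [hcar]; exact ha
        have hb' : b ∈ carrier ((restrict H Z).erase Z) := by rw [hcar]; exact hb
        have hj := hconn a ha' b hb'
        exact Relation.ReflTransGen.mono (fun u v ⟨W, hW, hu, hv⟩ => ⟨W, hH'sub hW, hu, hv⟩) _ _ (rtg_of_joined hj)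
      · exact Relation.ReflTransGen.single ⟨Z, hZ', ha, hb⟩
    have key : ∀ {a b : α}, Relation.ReflTransGen (rel (insert Y H)) a b →
        Relation.ReflTransGen (rel H) a b := by
      intro a b h
      induction h with
      | refl => exact Relation.ReflTransGen.refl
      | tail _ hbc ih => exact ih.trans (step _ _ hbc)
    exact joined_of_rtg hx (key h0)
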